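/- Under the same setting, if m(Ω) ≥ m₀ > 0 and m(Ω) ≤ m₁, |x| ≤ M on Ω ∈ K, and m(Ω Δ P_n(Ω)) ≤ CLM_n, then the centroids satisfy ‖c(Ω) − c(P_n(Ω))‖₂ ≤ (4CLM m₁ / m₀²)·M_n for n large enough; consequently sup_{Ω∈K} d_E(c(Ω), c(P_n(Ω))) → 0 as n → ∞. -/

import Mathlib

open MeasureTheory Filter

/-- The centroid `c(A) = (∫_A x dx)/m(A)` of a set `A ⊂ ℝ^d`. -/
noncomputable def centroid {d : ℕ} (A : Set (EuclideanSpace ℝ (Fin d))) :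
    EuclideanSpace ℝ (Fin d) :=
  (volume A).toReal⁻¹ • ∫ x in A, x

private lemma centroid_stable {d : ℕ} {M m₀ ε : ℝ} (hM : 0 < M) (hm₀ : 0 < m₀)
    {S T : Set (EuclideanSpace ℝ (Fin d))} (hS : MeasurableSet S) (hT : MeasurableSet T)
    (hSb : ∀ x ∈ S, ‖x‖ ≤ M) (hTb : ∀ x ∈ T, ‖x‖ ≤ M)
    (hlow : m₀ ≤ (volume S).toReal)
    (hε : (volume ((S \ T) ∪ (T \ S))).toReal ≤ ε) (hε2 : ε ≤ m₀ / 2) :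
    dist (centroid S) (centroid T) ≤ 2 * M * ε / m₀ := by
  have hεpos : 0 ≤ ε := le_trans ENNReal.toReal_nonneg hε
  have hSsub : S ⊆ Metric.closedBall 0 M := fun x hx =>
    mem_closedBall_zero_iff.2 (hSb x hx)
  have hTsub : T ⊆ Metric.closedBall 0 M := fun x hx =>
    mem_closedBall_zero_iff.2 (hTb x hx)
  have hSfin : volume S ≠ ⊤ := ((measure_mono hSsub).trans_lt measure_closedBall_lt_top).ne
  have hTfin : volume T ≠ ⊤ := ((measure_mono hTsub).trans_lt measure_closedBall_lt_top).ne
  have hsdfin : volume (S \ T) ≠ ⊤ := ((measure_mono Set.diff_subset).trans_lt hSfin.lt_top).ne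
  have hdsfin : volume (T \ S) ≠ ⊤ := ((measure_mono Set.diff_subset).trans_lt hTfin.lt_top).ne
  set a : ℝ := (volume S).toReal with ha_def
  set b : ℝ := (volume T).toReal with hb_def
  -- symmetric difference measure splits
  have hsplit : (volume (S \ T)).toReal + (volume (T \ S)).toReal ≤ ε := by
    have := measure_union (μ := volume) disjoint_sdiff_sdiff (hT.diff hS)
    rw [← ENNReal.toReal_add hsdfin hdsfin, ← this]
    exact hε
  have hsd0 : 0 ≤ (volume (S \ T)).toReal := ENNReal.toReal_nonneg
  have hds0 : 0 ≤ (volume (T \ S)).toReal := ENNReal.toReal_nonneg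
  -- measure comparison
  have ha_le : a ≤ b + (volume (S \ T)).toReal := by
    have h1 : volume S ≤ volume T + volume (S \ T) := by
      refine (measure_mono ?_).trans (measure_union_le _ _)
      intro x hx
      by_cases h : x ∈ T
      · exact Or.inl h
      · exact Or.inr ⟨hx, h⟩
    have h2 := ENNReal.toReal_mono (ENNReal.add_ne_top.2 ⟨hTfin, hsdfin⟩) h1
    rwa [ENNReal.toReal_add hTfin hsdfin] at h2
  have hb_le : b ≤ a + (volume (T \ S)).toReal := by
    have h1 : volume T ≤ volume S + volume (T \ S) := by
      refine (measure_mono ?_).trans (measure_union_le _ _)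
      intro x hx
      by_cases h : x ∈ S
      · exact Or.inl h
      · exact Or.inr ⟨hx, h⟩
    have h2 := ENNReal.toReal_mono (ENNReal.add_ne_top.2 ⟨hSfin, hdsfin⟩) h1
    rwa [ENNReal.toReal_add hSfin hdsfin] at h2
  have ha0 : 0 < a := lt_of_lt_of_le hm₀ hlow
  have hb0 : 0 < b := by linarith
  have habs : |a - b| ≤ ε := abs_sub_le_iff.2 ⟨by linarith, by linarith⟩
  -- integrability
  have hmId : AEStronglyMeasurable (fun x : EuclideanSpace ℝ (Fin d) => x) volume :=
    aestronglyMeasurable_id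
  have hIntS : IntegrableOn (fun x : EuclideanSpace ℝ (Fin d) => x) S volume :=
    Measure.integrableOn_of_bounded hSfin hmId ((ae_restrict_mem hS).mono hSb)
  have hIntT : IntegrableOn (fun x : EuclideanSpace ℝ (Fin d) => x) T volume :=
    Measure.integrableOn_of_bounded hTfin hmId ((ae_restrict_mem hT).mono hTb)
  -- integral decomposition
  have hIS := integral_inter_add_diff (f := fun x : EuclideanSpace ℝ (Fin d) => x)
    (μ := volume) hT hIntS
  have hIT := integral_inter_add_diff (f := fun x : EuclideanSpace ℝ (Fin d) => x)
    (μ := volume) hS hIntT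
  set I : EuclideanSpace ℝ (Fin d) := ∫ x in S, x with hI_def
  set J : EuclideanSpace ℝ (Fin d) := ∫ x in T, x with hJ_def
  have hIJ : I - J = (∫ x in S \ T, x) - ∫ x in T \ S, x := by
    rw [← hIS, ← hIT, Set.inter_comm]
    abel
  -- norm bounds
  have n1 : ‖(∫ x in S \ T, x : EuclideanSpace ℝ (Fin d))‖ ≤ M * (volume (S \ T)).toReal :=
    norm_setIntegral_le_of_norm_le_const hsdfin.lt_top (fun x hx => hSb x hx.1)
  have n2 : ‖(∫ x in T \ S, x : EuclideanSpace ℝ (Fin d))‖ ≤ M * (volume (T \ S)).toReal :=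
    norm_setIntegral_le_of_norm_le_const hdsfin.lt_top (fun x hx => hTb x hx.1)
  have nJ : ‖J‖ ≤ M * b :=
    norm_setIntegral_le_of_norm_le_const hTfin.lt_top hTb
  have nIJ : ‖I - J‖ ≤ M * ε := by
    rw [hIJ]
    calc ‖(∫ x in S \ T, x : EuclideanSpace ℝ (Fin d)) - ∫ x in T \ S, x‖
        ≤ M * (volume (S \ T)).toReal + M * (volume (T \ S)).toReal :=
          (norm_sub_le _ _).trans (add_le_add n1 n2)
      _ ≤ M * ε := by nlinarith
  -- main estimate
  have hdecomp : a⁻¹ • I - b⁻¹ • J = a⁻¹ • (I - J) + (a⁻¹ - b⁻¹) • J := by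
    rw [smul_sub, sub_smul]; abel
  have habinv : |a⁻¹ - b⁻¹| ≤ ε / (a * b) := by
    rw [inv_sub_inv ha0.ne' hb0.ne', abs_div, abs_of_pos (by positivity : (0:ℝ) < a * b)]
    apply div_le_div_of_nonneg_right ?_ (by positivity)
    · rwa [abs_sub_comm] at habs
  have key : dist (centroid S) (centroid T) ≤ m₀⁻¹ * (M * ε) + (ε / (a * b)) * (M * b) := by
    rw [centroid, centroid, dist_eq_norm, ← ha_def, ← hb_def, ← hI_def, ← hJ_def, hdecomp]
    calc ‖a⁻¹ • (I - J) + (a⁻¹ - b⁻¹) • J‖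
        ≤ ‖a⁻¹ • (I - J)‖ + ‖(a⁻¹ - b⁻¹) • J‖ := norm_add_le _ _
      _ = a⁻¹ * ‖I - J‖ + |a⁻¹ - b⁻¹| * ‖J‖ := by
          rw [norm_smul, norm_smul, Real.norm_eq_abs, Real.norm_eq_abs,
            abs_of_pos (inv_pos.2 ha0)]
      _ ≤ m₀⁻¹ * (M * ε) + (ε / (a * b)) * (M * b) := by
          refine add_le_add ?_ ?_
          · exact mul_le_mul (inv_anti₀ hm₀ hlow) nIJ (norm_nonneg _) (by positivity)
          · exact mul_le_mul habinv nJ (norm_nonneg _) (by positivity)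
  refine key.trans ?_
  have h1 : (ε / (a * b)) * (M * b) = M * ε / a := by field_simp
  have h2 : m₀⁻¹ * (M * ε) = M * ε / m₀ := by ring
  rw [h1, h2]
  have h3 : M * ε / a ≤ M * ε / m₀ := by gcongr
  linarith [show 2 * M * ε / m₀ = M * ε / m₀ + M * ε / m₀ by ring]

theorem stmt_15 {d : ℕ} {ι : Type*}
    (C L M m₀ m₁ : ℝ) (hC : 0 < C) (hL : 0 < L) (hM : 0 < M)
    (hm₀ : 0 < m₀) (hm₁ : 0 < m₁)
    (Ω : ι → Set (EuclideanSpace ℝ (Fin d)))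
    (A : ℕ → ι → Set (EuclideanSpace ℝ (Fin d))) (Mn : ℕ → ℝ)
    (hΩm : ∀ i, MeasurableSet (Ω i)) (hAm : ∀ n i, MeasurableSet (A n i))
    (hlow : ∀ i, m₀ ≤ (volume (Ω i)).toReal)
    (hup : ∀ i, (volume (Ω i)).toReal ≤ m₁)
    (hAup : ∀ n i, (volume (A n i)).toReal ≤ m₁)
    (hbound : ∀ n i, ∀ x ∈ Ω i ∪ A n i, ‖x‖ ≤ M)
    (hsym : ∀ n i, (volume ((Ω i \ A n i) ∪ (A n i \ Ω i))).toReal ≤ C * L * Mn n)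
    (hMn : ∀ n, 0 ≤ Mn n)
    (hMn0 : Tendsto Mn atTop (nhds 0)) :
    (∀ n i, C * L * Mn n ≤ m₀ / 2 →
      dist (centroid (Ω i)) (centroid (A n i)) ≤ (4 * C * L * M * m₁ / m₀ ^ 2) * Mn n) ∧
    (∀ ε > (0 : ℝ), ∃ N : ℕ, ∀ n ≥ N, ∀ i,
      dist (centroid (Ω i)) (centroid (A n i)) < ε) := by
  have part1 : ∀ n i, C * L * Mn n ≤ m₀ / 2 →
      dist (centroid (Ω i)) (centroid (A n i)) ≤ (4 * C * L * M * m₁ / m₀ ^ 2) * Mn n := by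
    intro n i hn
    have hkey := centroid_stable (ε := C * L * Mn n) hM hm₀ (hΩm i) (hAm n i)
      (fun x hx => hbound n i x (Or.inl hx)) (fun x hx => hbound n i x (Or.inr hx))
      (hlow i) (hsym n i) hn
    refine hkey.trans ?_
    have hm01 : m₀ ≤ m₁ := (hlow i).trans (hup i)
    have hMnn := hMn n
    rw [div_mul_eq_mul_div, div_le_div_iff₀ hm₀ (by positivity : (0:ℝ) < m₀ ^ 2)]
    have h := mul_le_mul_of_nonneg_left hm01
      (show (0:ℝ) ≤ 2 * (C * L * M * Mn n * m₀) by positivity)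
    nlinarith [h, mul_nonneg (mul_nonneg (mul_nonneg (mul_nonneg hC.le hL.le) hM.le) hMnn) hm₁.le]
  refine ⟨part1, ?_⟩
  intro ε hε
  set B : ℝ := 4 * C * L * M * m₁ / m₀ ^ 2 with hB_def
  have hB : 0 < B := by positivity
  set δ : ℝ := min (m₀ / (2 * (C * L))) (ε / B) with hδ_def
  have hδ : 0 < δ := lt_min (by positivity) (by positivity)
  have hev : ∀ᶠ n in atTop, Mn n < δ := hMn0.eventually (eventually_lt_nhds hδ)
  obtain ⟨N, hN⟩ := eventually_atTop.1 hev
  refine ⟨N, fun n hn i => ?_⟩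
  have hMnδ := hN n hn
  have hCLM : C * L * Mn n ≤ m₀ / 2 := by
    have h1 : Mn n ≤ m₀ / (2 * (C * L)) := le_of_lt (lt_of_lt_of_le hMnδ (min_le_left _ _))
    rw [le_div_iff₀ (by positivity : (0:ℝ) < 2 * (C * L))] at h1
    nlinarith
  have := part1 n i hCLM
  have h2 : Mn n < ε / B := lt_of_lt_of_le hMnδ (min_le_right _ _)
  have h3 : B * Mn n < ε := by
    rw [lt_div_iff₀ hB] at h2
    linarith [mul_comm B (Mn n)]
  exact lt_of_le_of_lt this h3
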